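/- Let G : ℝ → ℝ → ℝ be twice differentiable with G_{ee} < 0, G_{vv} < 0, and G_{ee}·G_{vv} > G_{ev}² at every point (concavity of the entropy), and G_e > 0. Define for ρ > 0, m ∈ ℝ, E ∈ ℝ the function q(ρ, m, E) = -ρ·G(E/ρ - m²/(2ρ²), 1/ρ). Then the second partial derivative q_{ρρ} is strictly positive whenever ρ > 0. -/

import Mathlib

open Real

/-- Decomposition of a continuous linear map on `ℝ × ℝ` over the standard basis. -/
lemma clm_basis (L : ℝ × ℝ →L[ℝ] ℝ) (x y : ℝ) :
    L (x, y) = x * L (1, 0) + y * L (0, 1) := by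
  have h : (x, y) = x • ((1 : ℝ), (0 : ℝ)) + y • ((0 : ℝ), (1 : ℝ)) := by
    simp [Prod.ext_iff]
  rw [h, map_add, map_smul, map_smul, smul_eq_mul, smul_eq_mul]

/-- Negative definiteness of a 2×2 quadratic form with negative diagonal and
positive determinant, evaluated at a vector with nonzero second coordinate. -/
lemma quad_neg {A B C x y : ℝ} (hA : A < 0) (hdet : B ^ 2 < A * C) (hy : y ≠ 0) :
    A * x ^ 2 + 2 * B * x * y + C * y ^ 2 < 0 := by
  have hy2 : 0 < y ^ 2 := pow_pos (abs_pos.mpr hy) 2 |>.trans_eq (by rw [sq_abs])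
  nlinarith [sq_nonneg (A * x + B * y), mul_pos (sub_pos.mpr hdet) hy2]

set_option maxHeartbeats 2000000 in
/-- positivity of `q_ρρ` for `q(ρ,m,E) = -ρ G(E/ρ - m²/(2ρ²), 1/ρ)`
under concavity of the entropy `G` and `G_e > 0`. -/
theorem qrr_pos
    (G : ℝ → ℝ → ℝ)
    (hG : ContDiff ℝ 2 (Function.uncurry G))
    (hGe : ∀ e v : ℝ, 0 < deriv (fun x => G x v) e)
    (hGee : ∀ e v : ℝ, deriv (fun x => deriv (fun y => G y v) x) e < 0)
    (hGvv : ∀ e v : ℝ, deriv (fun x => deriv (fun y => G e y) x) v < 0)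
    (hconc : ∀ e v : ℝ,
      (deriv (fun x => deriv (fun y => G y x) e) v) ^ 2 <
        (deriv (fun x => deriv (fun y => G y v) x) e) *
        (deriv (fun x => deriv (fun y => G e y) x) v))
    (q : ℝ → ℝ → ℝ → ℝ)
    (hq : ∀ ρ m E : ℝ, q ρ m E = -ρ * G (E / ρ - m ^ 2 / (2 * ρ ^ 2)) (1 / ρ)) :
    ∀ ρ m E : ℝ, 0 < ρ →
      0 < deriv (fun r => deriv (fun r' => q r' m E) r) ρ := by
  intro ρ m E hρ
  set F : ℝ × ℝ → ℝ := Function.uncurry G with hF_def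
  have hFd : Differentiable ℝ F := hG.differentiable two_ne_zero
  have hf'c : ContDiff ℝ 1 (fderiv ℝ F) := hG.fderiv_right (by norm_num)
  have hf'd : Differentiable ℝ (fderiv ℝ F) := hf'c.differentiable one_ne_zero
  have hF : ∀ p, HasFDerivAt F (fderiv ℝ F p) p := fun p => (hFd p).hasFDerivAt
  have hf' : ∀ p, HasFDerivAt (fderiv ℝ F) (fderiv ℝ (fderiv ℝ F) p) p :=
    fun p => (hf'd p).hasFDerivAt
  have lineE : ∀ (w x : ℝ), HasDerivAt (fun y : ℝ => (y, w)) ((1 : ℝ), (0 : ℝ)) x :=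
    fun w x => HasDerivAt.prodMk (hasDerivAt_id x) (hasDerivAt_const x w)
  have lineV : ∀ (a x : ℝ), HasDerivAt (fun y : ℝ => (a, y)) ((0 : ℝ), (1 : ℝ)) x :=
    fun a x => HasDerivAt.prodMk (hasDerivAt_const x a) (hasDerivAt_id x)
  -- first partial derivatives
  have hGe_eq : ∀ a b : ℝ, deriv (fun x => G x b) a = fderiv ℝ F (a, b) (1, 0) := by
    intro a b
    exact ((hF (a, b)).comp_hasDerivAt a (lineE b a)).deriv
  have hGv_eq : ∀ a b : ℝ, deriv (fun y => G a y) b = fderiv ℝ F (a, b) (0, 1) := by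
    intro a b
    exact ((hF (a, b)).comp_hasDerivAt b (lineV a b)).deriv
  -- second partial derivatives
  have hGee_eq : ∀ a b : ℝ,
      deriv (fun x => deriv (fun y => G y b) x) a
        = fderiv ℝ (fderiv ℝ F) (a, b) (1, 0) (1, 0) := by
    intro a b
    have hfun : (fun x => deriv (fun y => G y b) x)
        = fun x => fderiv ℝ F (x, b) (1, 0) := funext fun x => hGe_eq x b
    rw [hfun]
    have h1 : HasDerivAt (fun x => fderiv ℝ F (x, b))
        (fderiv ℝ (fderiv ℝ F) (a, b) (1, 0)) a :=
      (hf' (a, b)).comp_hasDerivAt a (lineE b a)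
    have h2 := h1.clm_apply (hasDerivAt_const a ((1 : ℝ), (0 : ℝ)))
    simpa using h2.deriv
  have hGvv_eq : ∀ a b : ℝ,
      deriv (fun x => deriv (fun y => G a y) x) b
        = fderiv ℝ (fderiv ℝ F) (a, b) (0, 1) (0, 1) := by
    intro a b
    have hfun : (fun x => deriv (fun y => G a y) x)
        = fun x => fderiv ℝ F (a, x) (0, 1) := funext fun x => hGv_eq a x
    rw [hfun]
    have h1 : HasDerivAt (fun x => fderiv ℝ F (a, x))
        (fderiv ℝ (fderiv ℝ F) (a, b) (0, 1)) b :=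
      (hf' (a, b)).comp_hasDerivAt b (lineV a b)
    have h2 := h1.clm_apply (hasDerivAt_const b ((0 : ℝ), (1 : ℝ)))
    simpa using h2.deriv
  have hGev_eq : ∀ a b : ℝ,
      deriv (fun x => deriv (fun y => G y x) a) b
        = fderiv ℝ (fderiv ℝ F) (a, b) (0, 1) (1, 0) := by
    intro a b
    have hfun : (fun x => deriv (fun y => G y x) a)
        = fun x => fderiv ℝ F (a, x) (1, 0) := funext fun x => hGe_eq a x
    rw [hfun]
    have h1 : HasDerivAt (fun x => fderiv ℝ F (a, x))
        (fderiv ℝ (fderiv ℝ F) (a, b) (0, 1)) b :=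
      (hf' (a, b)).comp_hasDerivAt b (lineV a b)
    have h2 := h1.clm_apply (hasDerivAt_const b ((1 : ℝ), (0 : ℝ)))
    simpa using h2.deriv
  have hsymm : ∀ p : ℝ × ℝ, ∀ a b : ℝ × ℝ,
      fderiv ℝ (fderiv ℝ F) p a b = fderiv ℝ (fderiv ℝ F) p b a :=
    fun p a b => second_derivative_symmetric hF (hf' p) a b
  -- the curve
  set ee : ℝ → ℝ := fun r => E / r - m ^ 2 / (2 * r ^ 2) with hee_def
  set vv : ℝ → ℝ := fun r => 1 / r with hvv_def
  set c : ℝ → ℝ × ℝ := fun r => (ee r, vv r) with hc_def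
  set e1 : ℝ → ℝ := fun r => -(E / r ^ 2) + m ^ 2 / r ^ 3 with he1_def
  set v1 : ℝ → ℝ := fun r => -(1 / r ^ 2) with hv1_def
  have hee : ∀ r : ℝ, r ≠ 0 → HasDerivAt ee (e1 r) r := by
    intro r hr
    have h1 : HasDerivAt (fun x : ℝ => E / x) ((0 * r - E * 1) / r ^ 2) r :=
      (hasDerivAt_const r E).div (hasDerivAt_id r) hr
    have hden : HasDerivAt (fun x : ℝ => 2 * x ^ 2) (2 * (2 * r ^ 1)) r := by
      simpa using (hasDerivAt_pow 2 r).const_mul (2 : ℝ)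
    have h2 : HasDerivAt (fun x : ℝ => m ^ 2 / (2 * x ^ 2))
        ((0 * (2 * r ^ 2) - m ^ 2 * (2 * (2 * r ^ 1))) / (2 * r ^ 2) ^ 2) r :=
      (hasDerivAt_const r (m ^ 2)).div hden (by positivity)
    have h := h1.sub h2
    refine h.congr_deriv ?_
    simp only [he1_def]
    field_simp
    ring
  have hvv : ∀ r : ℝ, r ≠ 0 → HasDerivAt vv (v1 r) r := by
    intro r hr
    have h : HasDerivAt (fun x : ℝ => 1 / x) ((0 * r - 1 * 1) / r ^ 2) r :=
      (hasDerivAt_const r 1).div (hasDerivAt_id r) hr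
    refine h.congr_deriv ?_
    simp only [hv1_def]
    field_simp
    ring
  set e2 : ℝ → ℝ := fun r => 2 * E / r ^ 3 - 3 * m ^ 2 / r ^ 4 with he2_def
  set v2 : ℝ → ℝ := fun r => 2 / r ^ 3 with hv2_def
  have he1' : HasDerivAt e1 (e2 ρ) ρ := by
    have hr := hρ.ne'
    have h1 : HasDerivAt (fun x : ℝ => E / x ^ 2)
        ((0 * ρ ^ 2 - E * (2 * ρ ^ 1)) / (ρ ^ 2) ^ 2) ρ :=
      (hasDerivAt_const ρ E).div (hasDerivAt_pow 2 ρ) (by positivity)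
    have h2 : HasDerivAt (fun x : ℝ => m ^ 2 / x ^ 3)
        ((0 * ρ ^ 3 - m ^ 2 * (3 * ρ ^ 2)) / (ρ ^ 3) ^ 2) ρ := by
      have := (hasDerivAt_const ρ (m ^ 2)).div (hasDerivAt_pow 3 ρ) (by positivity)
      refine this.congr_deriv ?_
      norm_num
    have h := h1.neg.add h2
    refine h.congr_deriv ?_
    simp only [he2_def]
    field_simp
    ring
  have hv1' : HasDerivAt v1 (v2 ρ) ρ := by
    have h : HasDerivAt (fun x : ℝ => 1 / x ^ 2)
        ((0 * ρ ^ 2 - 1 * (2 * ρ ^ 1)) / (ρ ^ 2) ^ 2) ρ :=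
      (hasDerivAt_const ρ 1).div (hasDerivAt_pow 2 ρ) (by positivity)
    have h' := h.neg
    refine h'.congr_deriv ?_
    simp only [hv2_def]
    field_simp
    ring
  -- the first derivative of q in ρ
  set q1 : ℝ → ℝ := fun r => -F (c r) - r * fderiv ℝ F (c r) (e1 r, v1 r) with hq1_def
  have hfun : (fun r' => q r' m E) = fun r' => -r' * F (c r') := by
    funext r'
    rw [hq]
    rfl
  have hq1 : ∀ r : ℝ, 0 < r → HasDerivAt (fun r' => q r' m E) (q1 r) r := by
    intro r hr
    rw [hfun]
    have hc' : HasDerivAt c (e1 r, v1 r) r := HasDerivAt.prodMk (hee r hr.ne') (hvv r hr.ne')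
    have hFc : HasDerivAt (fun x => F (c x)) (fderiv ℝ F (c r) (e1 r, v1 r)) r :=
      (hF (c r)).comp_hasDerivAt r hc'
    have h := ((hasDerivAt_id r).neg).mul hFc
    refine h.congr_deriv ?_
    simp only [Pi.neg_apply, id_eq]
    ring
  have hev : (fun r => deriv (fun r' => q r' m E) r) =ᶠ[nhds ρ] q1 := by
    filter_upwards [eventually_gt_nhds hρ] with r hr
    exact (hq1 r hr).deriv
  rw [hev.deriv_eq]
  -- the second derivative
  have hcρ : HasDerivAt c (e1 ρ, v1 ρ) ρ := HasDerivAt.prodMk (hee ρ hρ.ne') (hvv ρ hρ.ne')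
  have hf'comp : HasDerivAt (fun r => fderiv ℝ F (c r))
      (fderiv ℝ (fderiv ℝ F) (c ρ) (e1 ρ, v1 ρ)) ρ :=
    (hf' (c ρ)).comp_hasDerivAt ρ hcρ
  have hA : HasDerivAt (fun r => fderiv ℝ F (c r) (e1 r, v1 r))
      (fderiv ℝ (fderiv ℝ F) (c ρ) (e1 ρ, v1 ρ) (e1 ρ, v1 ρ)
        + fderiv ℝ F (c ρ) (e2 ρ, v2 ρ)) ρ :=
    hf'comp.clm_apply (HasDerivAt.prodMk he1' hv1')
  have hFc : HasDerivAt (fun x => F (c x)) (fderiv ℝ F (c ρ) (e1 ρ, v1 ρ)) ρ :=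
    (hF (c ρ)).comp_hasDerivAt ρ hcρ
  have hq1' : HasDerivAt q1
      (-(fderiv ℝ F (c ρ) (e1 ρ, v1 ρ))
        - (1 * fderiv ℝ F (c ρ) (e1 ρ, v1 ρ)
          + ρ * (fderiv ℝ (fderiv ℝ F) (c ρ) (e1 ρ, v1 ρ) (e1 ρ, v1 ρ)
            + fderiv ℝ F (c ρ) (e2 ρ, v2 ρ)))) ρ :=
    hFc.neg.sub ((hasDerivAt_id ρ).mul hA)
  rw [hq1'.deriv]
  -- algebraic reduction
  set Ge := fderiv ℝ F (c ρ) (1, 0) with hGe_def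
  set Gv := fderiv ℝ F (c ρ) (0, 1) with hGv_def
  set Gee := fderiv ℝ (fderiv ℝ F) (c ρ) (1, 0) (1, 0) with hGee_def
  set Gev := fderiv ℝ (fderiv ℝ F) (c ρ) (0, 1) (1, 0) with hGev_def
  set Gvv := fderiv ℝ (fderiv ℝ F) (c ρ) (0, 1) (0, 1) with hGvv_def
  have hL1 : fderiv ℝ F (c ρ) (e1 ρ, v1 ρ) = e1 ρ * Ge + v1 ρ * Gv :=
    clm_basis _ _ _
  have hL2 : fderiv ℝ F (c ρ) (e2 ρ, v2 ρ) = e2 ρ * Ge + v2 ρ * Gv :=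
    clm_basis _ _ _
  have hB : fderiv ℝ (fderiv ℝ F) (c ρ) (e1 ρ, v1 ρ) (e1 ρ, v1 ρ)
      = e1 ρ ^ 2 * Gee + 2 * Gev * e1 ρ * v1 ρ + v1 ρ ^ 2 * Gvv := by
    have h1 : fderiv ℝ (fderiv ℝ F) (c ρ) (e1 ρ, v1 ρ)
        = e1 ρ • fderiv ℝ (fderiv ℝ F) (c ρ) (1, 0)
          + v1 ρ • fderiv ℝ (fderiv ℝ F) (c ρ) (0, 1) := by
      have h : ((e1 ρ, v1 ρ) : ℝ × ℝ)
          = e1 ρ • ((1 : ℝ), (0 : ℝ)) + v1 ρ • ((0 : ℝ), (1 : ℝ)) := by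
        simp [Prod.ext_iff]
      rw [h, map_add, map_smul, map_smul]
    rw [h1]
    simp only [ContinuousLinearMap.add_apply, ContinuousLinearMap.smul_apply, smul_eq_mul]
    rw [clm_basis (fderiv ℝ (fderiv ℝ F) (c ρ) (1, 0)) (e1 ρ) (v1 ρ),
      clm_basis (fderiv ℝ (fderiv ℝ F) (c ρ) (0, 1)) (e1 ρ) (v1 ρ)]
    have hs : fderiv ℝ (fderiv ℝ F) (c ρ) (1, 0) (0, 1) = Gev := by
      rw [hGev_def]; exact hsymm (c ρ) (1, 0) (0, 1)
    rw [hs]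
    ring
  rw [hL1, hL2, hB]
  -- positivity facts
  have hcρ_eq : c ρ = (ee ρ, vv ρ) := rfl
  have hGe_pos : 0 < Ge := by
    have := hGe (ee ρ) (vv ρ); rwa [hGe_eq] at this
  have hGee_neg : Gee < 0 := by
    have := hGee (ee ρ) (vv ρ); rwa [hGee_eq] at this
  have hGvv_neg : Gvv < 0 := by
    have := hGvv (ee ρ) (vv ρ); rwa [hGvv_eq] at this
  have hdet : Gev ^ 2 < Gee * Gvv := by
    have := hconc (ee ρ) (vv ρ); rwa [hGev_eq, hGee_eq, hGvv_eq] at this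
  -- combine coefficients
  have he1ρ : e1 ρ = -(E / ρ ^ 2) + m ^ 2 / ρ ^ 3 := rfl
  have hkey1 : -(e1 ρ * Ge + v1 ρ * Gv)
      - (1 * (e1 ρ * Ge + v1 ρ * Gv)
        + ρ * ((e1 ρ ^ 2 * Gee + 2 * Gev * e1 ρ * v1 ρ + v1 ρ ^ 2 * Gvv)
          + (e2 ρ * Ge + v2 ρ * Gv)))
      = m ^ 2 / ρ ^ 3 * Ge
        - ρ * (e1 ρ ^ 2 * Gee + 2 * Gev * e1 ρ * v1 ρ + v1 ρ ^ 2 * Gvv) := by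
    have hc1 : -2 * e1 ρ - ρ * e2 ρ = m ^ 2 / ρ ^ 3 := by
      rw [he1_def, he2_def]
      field_simp
      ring
    have hc2 : -2 * v1 ρ - ρ * v2 ρ = 0 := by
      rw [hv1_def, hv2_def]
      field_simp
      ring
    linear_combination Ge * hc1 + Gv * hc2
  rw [hkey1]
  have hv1ne : v1 ρ ≠ 0 := by
    rw [hv1_def]
    simp only [neg_ne_zero]
    exact one_div_ne_zero (pow_ne_zero 2 hρ.ne')
  have hQ : Gee * e1 ρ ^ 2 + 2 * Gev * e1 ρ * v1 ρ + Gvv * v1 ρ ^ 2 < 0 :=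
    quad_neg hGee_neg hdet hv1ne
  have h1 : 0 ≤ m ^ 2 / ρ ^ 3 * Ge := by positivity
  have h2 : 0 < ρ * -(Gee * e1 ρ ^ 2 + 2 * Gev * e1 ρ * v1 ρ + Gvv * v1 ρ ^ 2) :=
    mul_pos hρ (neg_pos.mpr hQ)
  have h3 : m ^ 2 / ρ ^ 3 * Ge
      - ρ * (e1 ρ ^ 2 * Gee + 2 * Gev * e1 ρ * v1 ρ + v1 ρ ^ 2 * Gvv)
      = m ^ 2 / ρ ^ 3 * Ge
        + ρ * -(Gee * e1 ρ ^ 2 + 2 * Gev * e1 ρ * v1 ρ + Gvv * v1 ρ ^ 2) := by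
    ring
  rw [h3]
  exact add_pos_of_nonneg_of_pos h1 h2
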